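/- arXiv:1512.09296 — 4 statements merged into one kernel-verified Lean document; each statement's English description precedes it below -/
import Mathlib

section
/- Let g ≥ 1. The matrix M = M(g) satisfies M² = 4^g · I. Moreover, over ℝ, the eigenspace of M for the eigenvalue 2^g has dimension k_g^+ = 2^{g−1}(2^g+1) and the eigenspace for the eigenvalue −2^g has dimension k_g^− = 2^{g−1}(2^g−1), and these are the only eigenvalues. -/
open scoped BigOperators

/-- The quadratic form `Σ_{i=1}^g x_i x_{g+i}` on `𝔽_2^{2g}`, with `𝔽_2^{2g}`
realized as pairs `(x_1,…,x_g), (x_{g+1},…,x_{2g})`. -/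
def Qf {g : ℕ} (x : (Fin g → ZMod 2) × (Fin g → ZMod 2)) : ZMod 2 :=
  ∑ i, x.1 i * x.2 i

/-- The `4^g × 4^g` matrix `M(g)` with entry
`M_{m,n} = (−1)^{Σ_i (m_i n_{g+i} + n_i m_{g+i})}` (exponent computed using
the representatives in `{0,1}`). -/
def Mmat (g : ℕ) :
    Matrix ((Fin g → ZMod 2) × (Fin g → ZMod 2)) ((Fin g → ZMod 2) × (Fin g → ZMod 2)) ℝ :=
  fun m n => (-1 : ℝ) ^ (∑ i, ((m.1 i).val * (n.2 i).val + (n.1 i).val * (m.2 i).val))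

/-- `M⁺`, the principal submatrix of `M(g)` indexed by `K_g^+ × K_g^+`. -/
def Mplus (g : ℕ) :
    Matrix {x : (Fin g → ZMod 2) × (Fin g → ZMod 2) // Qf x = 0}
      {x : (Fin g → ZMod 2) × (Fin g → ZMod 2) // Qf x = 0} ℝ :=
  fun m n => Mmat g m.1 n.1

/-- `M⁻`, the principal submatrix of `M(g)` indexed by `K_g^− × K_g^−`. -/
def Mminus (g : ℕ) :
    Matrix {x : (Fin g → ZMod 2) × (Fin g → ZMod 2) // Qf x = 1}
      {x : (Fin g → ZMod 2) × (Fin g → ZMod 2) // Qf x = 1} ℝ :=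
  fun m n => Mmat g m.1 n.1

/-- `N`, the submatrix of `M(g)` indexed by `K_g^+ × K_g^−`. -/
def Nmat (g : ℕ) :
    Matrix {x : (Fin g → ZMod 2) × (Fin g → ZMod 2) // Qf x = 0}
      {x : (Fin g → ZMod 2) × (Fin g → ZMod 2) // Qf x = 1} ℝ :=
  fun m n => Mmat g m.1 n.1

/-! ### Auxiliary material -/

/-- The index space `𝔽_2^{2g}`. -/
abbrev Vg (g : ℕ) := (Fin g → ZMod 2) × (Fin g → ZMod 2)

/-- The symplectic/symmetric pairing. -/
def Bf {g : ℕ} (m n : Vg g) : ZMod 2 := ∑ i, (m.1 i * n.2 i + n.1 i * m.2 i)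

/-- The sign character of `ZMod 2`. -/
def chi (t : ZMod 2) : ℝ := (-1 : ℝ) ^ t.val

lemma chi_add (a b : ZMod 2) : chi (a + b) = chi a * chi b := by
  unfold chi
  rw [← pow_add, ZMod.val_add, ← neg_one_pow_eq_pow_mod_two]

lemma chi_natCast (k : ℕ) : chi (k : ZMod 2) = (-1 : ℝ) ^ k := by
  unfold chi
  rw [ZMod.val_natCast]
  conv_rhs => rw [← Nat.div_add_mod k 2, pow_add, pow_mul, neg_one_sq, one_pow, one_mul]

lemma chi_zero : chi 0 = 1 := by norm_num [chi]
lemma chi_one : chi 1 = -1 := by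
  norm_num [chi, show ((1:ZMod 2)).val = 1 from rfl]

lemma Bf_symm {g : ℕ} (m n : Vg g) : Bf m n = Bf n m := by
  unfold Bf; apply Finset.sum_congr rfl; intro i _; ring

lemma Bf_add_left {g : ℕ} (m p n : Vg g) : Bf (m + p) n = Bf m n + Bf p n := by
  unfold Bf
  rw [← Finset.sum_add_distrib]
  apply Finset.sum_congr rfl; intro i _
  simp only [Prod.fst_add, Prod.snd_add, Pi.add_apply]; ring

lemma Bf_add_right {g : ℕ} (x n n₀ : Vg g) : Bf x (n + n₀) = Bf x n + Bf x n₀ := by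
  rw [Bf_symm, Bf_add_left, Bf_symm n x, Bf_symm n₀ x]

lemma Bf_zero_left {g : ℕ} (n : Vg g) : Bf (0 : Vg g) n = 0 := by
  unfold Bf; simp

lemma Mmat_apply {g : ℕ} (m n : Vg g) : Mmat g m n = chi (Bf m n) := by
  rw [Mmat, ← chi_natCast]
  congr 1
  push_cast
  unfold Bf
  apply Finset.sum_congr rfl
  intro i _
  simp [ZMod.natCast_val, ZMod.cast_id]

lemma card_Vg (g : ℕ) : Fintype.card (Vg g) = 4 ^ g := by
  simp [Fintype.card_prod, ZMod.card]
  rw [← mul_pow]; norm_num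

lemma add_self_Vg {g : ℕ} (v : Vg g) : v + v = 0 := by
  have h : ∀ a : ZMod 2, a + a = 0 := by decide
  refine Prod.ext ?_ ?_ <;> funext i <;> exact h _

lemma sum_chi_ne {g : ℕ} (x : Vg g) (hx : x ≠ 0) : ∑ n : Vg g, chi (Bf x n) = 0 := by
  obtain ⟨n₀, hn₀⟩ : ∃ n₀ : Vg g, Bf x n₀ = 1 := by
    have h : x.1 ≠ 0 ∨ x.2 ≠ 0 := by
      by_contra hc; push_neg at hc; exact hx (Prod.ext hc.1 hc.2)
    rcases h with h1 | h2
    · obtain ⟨j, hj⟩ := Function.ne_iff.mp h1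
      have hj' : x.1 j ≠ 0 := by simpa using hj
      refine ⟨(0, Pi.single j 1), ?_⟩
      have hx1 : x.1 j = 1 := by
        revert hj'; generalize x.1 j = a; revert a; decide
      simp [Bf, Pi.single_apply, mul_ite, Finset.sum_ite_eq', hx1]
    · obtain ⟨j, hj⟩ := Function.ne_iff.mp h2
      have hj' : x.2 j ≠ 0 := by simpa using hj
      refine ⟨(Pi.single j 1, 0), ?_⟩
      have hx2 : x.2 j = 1 := by
        revert hj'; generalize x.2 j = a; revert a; decide
      simp [Bf, Pi.single_apply, ite_mul, Finset.sum_ite_eq', hx2]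
  have key : ∀ n : Vg g, chi (Bf x (n + n₀)) = - chi (Bf x n) := by
    intro n; rw [Bf_add_right, chi_add, hn₀, chi_one, mul_neg_one]
  have hS : ∑ n : Vg g, chi (Bf x n) = - ∑ n : Vg g, chi (Bf x n) := by
    calc ∑ n : Vg g, chi (Bf x n)
        = ∑ n : Vg g, chi (Bf x (n + n₀)) :=
          (Fintype.sum_equiv (Equiv.addRight n₀) _ _ (fun n => rfl)).symm
      _ = ∑ n : Vg g, - chi (Bf x n) := by simp only [key]
      _ = - ∑ n : Vg g, chi (Bf x n) := by rw [Finset.sum_neg_distrib]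
  linarith

lemma Mmat_sq (g : ℕ) : Mmat g * Mmat g = (4 ^ g : ℝ) • 1 := by
  ext m p
  rw [Matrix.mul_apply]
  have hterm : ∀ n : Vg g, Mmat g m n * Mmat g n p = chi (Bf (m + p) n) := by
    intro n
    rw [Mmat_apply, Mmat_apply, ← chi_add, Bf_symm n p, ← Bf_add_left]
  rw [Finset.sum_congr rfl (fun n _ => hterm n)]
  by_cases hmp : m = p
  · subst hmp
    rw [add_self_Vg]
    simp only [Bf_zero_left, chi_zero, Finset.sum_const, Finset.card_univ, card_Vg,
      nsmul_eq_mul, mul_one, Matrix.smul_apply, Matrix.one_apply_eq, smul_eq_mul]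
    push_cast; ring
  · have hne : m + p ≠ 0 := by
      intro h
      apply hmp
      have h2 : m + (p + p) = p := by rw [← add_assoc, h, zero_add]
      rwa [add_self_Vg, add_zero] at h2
    rw [sum_chi_ne _ hne]
    simp [Matrix.smul_apply, Matrix.one_apply, hmp]

lemma Mmat_diag (g : ℕ) {m : Vg g} : Mmat g m m = 1 := by
  rw [Mmat]
  have : (∑ i, ((m.1 i).val * (m.2 i).val + (m.1 i).val * (m.2 i).val))
      = 2 * ∑ i, (m.1 i).val * (m.2 i).val := by
    rw [Finset.mul_sum]; apply Finset.sum_congr rfl; intro i _; ring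
  rw [this, pow_mul, neg_one_sq, one_pow]

lemma Mmat_trace (g : ℕ) : Matrix.trace (Mmat g) = (4 ^ g : ℝ) := by
  unfold Matrix.trace
  simp only [Matrix.diag, Mmat_diag, Matrix.diag_apply]
  simp only [Finset.sum_const, Finset.card_univ, nsmul_eq_mul, mul_one]
  rw [card_Vg]
  push_cast
  ring

lemma trace_mulVecLin {n : Type*} [Fintype n] [DecidableEq n] (A : Matrix n n ℝ) :
    LinearMap.trace ℝ (n → ℝ) (Matrix.mulVecLin A) = Matrix.trace A := by
  rw [LinearMap.trace_eq_matrix_trace ℝ (Pi.basisFun ℝ n), LinearMap.toMatrix_eq_toMatrix',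
    ← Matrix.toLin'_apply', LinearMap.toMatrix'_toLin']

/-- `M² = 4^g · I`; the eigenspace of `M` for `2^g` has dimension
`k_g^+ = 2^{g−1}(2^g+1)`, the eigenspace for `−2^g` has dimension
`k_g^− = 2^{g−1}(2^g−1)`, and these are the only eigenvalues. -/
theorem Mmat_sq_and_eigenspaces (g : ℕ) (hg : 1 ≤ g) :
    Mmat g * Mmat g = (4 ^ g : ℝ) • 1 ∧
      Module.finrank ℝ
          (Module.End.eigenspace (Matrix.mulVecLin (Mmat g)) ((2 : ℝ) ^ g)) =
        2 ^ (g - 1) * (2 ^ g + 1) ∧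
      Module.finrank ℝ
          (Module.End.eigenspace (Matrix.mulVecLin (Mmat g)) (-(2 : ℝ) ^ g)) =
        2 ^ (g - 1) * (2 ^ g - 1) ∧
      ∀ μ : ℝ, Module.End.HasEigenvalue (Matrix.mulVecLin (Mmat g)) μ →
        μ = (2 : ℝ) ^ g ∨ μ = -(2 : ℝ) ^ g := by
  set L := Matrix.mulVecLin (Mmat g) with hL
  set c : ℝ := (2 : ℝ) ^ g with hc
  have hc0 : c ≠ 0 := by positivity
  have h2c0 : (2 : ℝ) * c ≠ 0 := by positivity
  have h4c : (4 : ℝ) ^ g = c ^ 2 := by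
    rw [hc, ← pow_mul, mul_comm g 2, pow_mul]; norm_num
  have hL2 : ∀ v, L (L v) = (c ^ 2) • v := by
    intro v
    rw [hL, Matrix.mulVecLin_apply, Matrix.mulVecLin_apply, Matrix.mulVec_mulVec,
      Mmat_sq, h4c, Matrix.smul_mulVec, Matrix.one_mulVec]
  have hgg : g - 1 + 1 = g := Nat.succ_pred_eq_of_pos hg
  have h2g : (2 : ℝ) ^ g = 2 * (2 : ℝ) ^ (g - 1) := by
    conv_lhs => rw [← hgg]
    rw [pow_succ]; ring
  have ha : c = 2 * (2 : ℝ) ^ (g - 1) := by rw [hc]; exact h2g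
  have ha0 : (2 : ℝ) ^ (g - 1) ≠ 0 := by positivity
  -- the projection onto the (+c)-eigenspace
  set P : ((Vg g → ℝ)) →ₗ[ℝ] (Vg g → ℝ) := ((2 * c)⁻¹) • (L + c • LinearMap.id) with hPdef
  set P' : ((Vg g → ℝ)) →ₗ[ℝ] (Vg g → ℝ) := ((2 * c)⁻¹) • (c • LinearMap.id - L) with hP'def
  have hproj : LinearMap.IsProj (Module.End.eigenspace L c) P := by
    constructor
    · intro x
      rw [Module.End.mem_eigenspace_iff]
      show L (P x) = c • P x
      simp only [hPdef, LinearMap.smul_apply, LinearMap.add_apply, LinearMap.id_apply,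
        map_add, map_smul, hL2]
      match_scalars <;> field_simp <;> ring
    · intro x hx
      rw [Module.End.mem_eigenspace_iff] at hx
      simp only [hPdef, LinearMap.smul_apply, LinearMap.add_apply, LinearMap.id_apply, hx]
      match_scalars
      field_simp
      ring
  have hproj' : LinearMap.IsProj (Module.End.eigenspace L (-c)) P' := by
    constructor
    · intro x
      rw [Module.End.mem_eigenspace_iff]
      show L (P' x) = (-c) • P' x
      simp only [hP'def, LinearMap.smul_apply, LinearMap.sub_apply, LinearMap.smul_apply,
        LinearMap.id_apply, map_sub, map_smul, hL2]
      match_scalars <;> field_simp <;> ring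
    · intro x hx
      rw [Module.End.mem_eigenspace_iff] at hx
      simp only [hP'def, LinearMap.smul_apply, LinearMap.sub_apply, LinearMap.smul_apply,
        LinearMap.id_apply, hx]
      match_scalars
      field_simp
      ring
  -- traces of the projections
  have htrP : LinearMap.trace ℝ _ P = (2 * c)⁻¹ * (4 ^ g + c * 4 ^ g) := by
    have hQ : Matrix.mulVecLin (((2 * c)⁻¹) • (Mmat g + c • (1 : Matrix (Vg g) (Vg g) ℝ))) = P := by
      rw [← Matrix.toLin'_apply', map_smul, map_add, map_smul, Matrix.toLin'_one,
        Matrix.toLin'_apply', hPdef, hL]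
    rw [← hQ, trace_mulVecLin, Matrix.trace_smul, Matrix.trace_add, Matrix.trace_smul,
      Matrix.trace_one, Mmat_trace]
    simp only [card_Vg, smul_eq_mul]
    push_cast
    ring
  have htrP' : LinearMap.trace ℝ _ P' = (2 * c)⁻¹ * (c * 4 ^ g - 4 ^ g) := by
    have hQ : Matrix.mulVecLin (((2 * c)⁻¹) • (c • (1 : Matrix (Vg g) (Vg g) ℝ) - Mmat g)) = P' := by
      rw [← Matrix.toLin'_apply', map_smul, map_sub, map_smul, Matrix.toLin'_one,
        Matrix.toLin'_apply', hP'def, hL]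
    rw [← hQ, trace_mulVecLin, Matrix.trace_smul, Matrix.trace_sub, Matrix.trace_smul,
      Matrix.trace_one, Mmat_trace]
    simp only [card_Vg, smul_eq_mul]
    push_cast
    ring
  refine ⟨Mmat_sq g, ?_, ?_, ?_⟩
  · -- dimension of the (+2^g)-eigenspace
    have h1 : (Module.finrank ℝ (Module.End.eigenspace L c) : ℝ)
        = ((2 ^ (g - 1) * (2 ^ g + 1) : ℕ) : ℝ) := by
      rw [← hproj.trace, htrP, h4c, ha]
      push_cast
      rw [h2g]
      field_simp
      ring
    exact_mod_cast h1
  · -- dimension of the (−2^g)-eigenspace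
    have h1 : (Module.finrank ℝ (Module.End.eigenspace L (-c)) : ℝ)
        = ((2 ^ (g - 1) * (2 ^ g - 1) : ℕ) : ℝ) := by
      rw [← hproj'.trace, htrP', h4c, ha]
      rw [Nat.cast_mul, Nat.cast_sub (Nat.one_le_two_pow)]
      push_cast
      rw [h2g]
      field_simp
    exact_mod_cast h1
  · -- the only eigenvalues are ±2^g
    intro μ hμ
    obtain ⟨v, hv⟩ := hμ.exists_hasEigenvector
    have hveq : L v = μ • v := hv.apply_eq_smul
    have h1 := hL2 v
    rw [hveq, map_smul, hveq, smul_smul] at h1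
    have h2 : (μ * μ - c ^ 2) • v = 0 := by rw [sub_smul, h1, sub_self]
    have h3 : μ * μ - c ^ 2 = 0 := by
      rcases smul_eq_zero.mp h2 with h | h
      · exact h
      · exact absurd h hv.2
    have h4 : (μ - c) * (μ + c) = 0 := by linear_combination h3
    rcases mul_eq_zero.mp h4 with h | h
    · exact Or.inl (sub_eq_zero.mp h)
    · exact Or.inr (eq_neg_of_add_eq_zero_left h)
end

section
/- Let g ≥ 1. Then the rank of the matrix N (over ℝ or ℚ) equals (1/3)(4^g − 1). In particular, the columns of N span the full eigenspace of M^+ for the eigenvalue −2^{g−1}. -/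
open scoped BigOperators

namespace NR
variable {g : ℕ}

abbrev G (g : ℕ) := (Fin g → ZMod 2) × (Fin g → ZMod 2)

noncomputable def χ (a : ZMod 2) : ℝ := (-1 : ℝ) ^ a.val

lemma zmod2_cases (a : ZMod 2) : a = 0 ∨ a = 1 := by revert a; decide

lemma χ_zero : χ 0 = 1 := by simp [χ]
lemma χ_one : χ 1 = -1 := by simp [χ, ZMod.val_one]

lemma χ_add (a b : ZMod 2) : χ (a + b) = χ a * χ b := by
  rcases zmod2_cases a with rfl | rfl <;> rcases zmod2_cases b with rfl | rfl <;>
    simp [χ_zero, χ_one, χ, show (1 + 1 : ZMod 2) = 0 from rfl, ZMod.val_one, ZMod.val_zero]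

lemma χ_natCast (k : ℕ) : χ ((k : ZMod 2)) = (-1 : ℝ) ^ k := by
  induction k with
  | zero => simp [χ_zero]
  | succ n ih => rw [Nat.cast_succ, χ_add, ih, χ_one, pow_succ]

def Bf (m n : G g) : ZMod 2 := ∑ i, (m.1 i * n.2 i + n.1 i * m.2 i)

lemma Mmat_eq (m n : G g) : Mmat g m n = χ (Bf m n) := by
  rw [Mmat, show (Bf m n) = ((∑ i, ((m.1 i).val * (n.2 i).val + (n.1 i).val * (m.2 i).val) : ℕ) : ZMod 2) from ?_, χ_natCast]
  push_cast
  refine Finset.sum_congr rfl fun i _ => ?_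
  simp [ZMod.natCast_val, ZMod.cast_id]

lemma Bf_comm (m n : G g) : Bf m n = Bf n m := by
  refine Finset.sum_congr rfl fun i _ => ?_; ring

lemma Bf_add_left (m m' n : G g) : Bf (m + m') n = Bf m n + Bf m' n := by
  rw [Bf, Bf, Bf, ← Finset.sum_add_distrib]
  refine Finset.sum_congr rfl fun i _ => ?_
  simp only [Prod.fst_add, Prod.snd_add, Pi.add_apply]; ring

lemma Bf_self (m : G g) : Bf m m = 0 := by
  rw [Bf]
  refine Finset.sum_eq_zero fun i _ => ?_
  rw [mul_comm (m.1 i)]; exact CharTwo.add_self_eq_zero _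

lemma Qf_add (m n : G g) : Qf (m + n) = Qf m + Qf n + Bf m n := by
  rw [Qf, Qf, Qf, Bf, ← Finset.sum_add_distrib, ← Finset.sum_add_distrib]
  refine Finset.sum_congr rfl fun i _ => ?_
  simp only [Prod.fst_add, Prod.snd_add, Pi.add_apply]; ring

end NR

namespace NR
variable {g : ℕ}

lemma sum_char (v : Fin g → ZMod 2) :
    ∑ w : Fin g → ZMod 2, χ (∑ i, v i * w i) = if v = 0 then (2:ℝ)^g else 0 := by
  split_ifs with hv
  · subst hv
    simp [χ_zero, Finset.sum_const, Fintype.card_fun]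
  · obtain ⟨j, hj⟩ : ∃ j, v j ≠ 0 := by
      by_contra h; push_neg at h; exact hv (funext fun i => h i)
    have hj1 : v j = 1 := (zmod2_cases (v j)).resolve_left hj
    set s : Fin g → ZMod 2 := Pi.single j 1 with hs
    have key : ∀ w : Fin g → ZMod 2,
        χ (∑ i, v i * (w + s) i) = - χ (∑ i, v i * w i) := by
      intro w
      have : ∑ i, v i * (w + s) i
          = (∑ i, v i * w i) + (∑ i, v i * s i) := by
        rw [← Finset.sum_add_distrib]
        exact Finset.sum_congr rfl fun i _ => by simp [mul_add]
      rw [this, χ_add]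
      have : ∑ i, v i * s i = 1 := by
        rw [Finset.sum_eq_single j]
        · simp [hs, hj1]
        · intro i _ hi; simp [hs, Pi.single_apply, hi]
        · simp
      rw [this, χ_one]; ring
    have hbij : Function.Bijective (fun w : Fin g → ZMod 2 => w + s) :=
      (Equiv.addRight s).bijective
    have h2 := Fintype.sum_bijective _ hbij
      (fun w => - χ (∑ i, v i * w i)) (fun w => χ (∑ i, v i * w i))
      (fun w => (key w).symm)
    have h3 : - ∑ w : Fin g → ZMod 2, χ (∑ i, v i * w i)
        = ∑ w : Fin g → ZMod 2, χ (∑ i, v i * w i) := by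
      simpa using h2
    linarith

lemma sum_chi_Bf (m : G g) :
    ∑ n : G g, χ (Bf m n) = if m = 0 then (2:ℝ)^g * (2:ℝ)^g else 0 := by
  have hBf : ∀ n : G g, Bf m n = (∑ i, m.2 i * n.1 i) + (∑ i, m.1 i * n.2 i) := by
    intro n
    rw [Bf, ← Finset.sum_add_distrib]
    exact Finset.sum_congr rfl fun i _ => by ring
  rw [Fintype.sum_prod_type]
  calc ∑ n1 : Fin g → ZMod 2, ∑ n2 : Fin g → ZMod 2, χ (Bf m (n1, n2))
      = ∑ n1 : Fin g → ZMod 2, (χ (∑ i, m.2 i * n1 i) * ∑ n2 : Fin g → ZMod 2, χ (∑ i, m.1 i * n2 i)) := by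
        refine Finset.sum_congr rfl fun n1 _ => ?_
        rw [Finset.mul_sum]
        exact Finset.sum_congr rfl fun n2 _ => by rw [hBf (n1, n2), χ_add]
    _ = (∑ n1 : Fin g → ZMod 2, χ (∑ i, m.2 i * n1 i)) * (∑ n2 : Fin g → ZMod 2, χ (∑ i, m.1 i * n2 i)) := by
        rw [← Finset.sum_mul]
    _ = _ := by
        rw [sum_char, sum_char]
        rcases eq_or_ne m 0 with rfl | hm
        · simp
        · have : m.2 ≠ 0 ∨ m.1 ≠ 0 := by
            by_contra h; push_neg at h
            exact hm (Prod.ext h.2 h.1)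
          rcases this with h | h
          · rw [if_neg h]; simp [if_neg hm, zero_mul]
          · rw [if_neg h]; simp [if_neg hm]

lemma gauss : ∑ n : G g, χ (Qf n) = (2:ℝ)^g := by
  rw [Fintype.sum_prod_type]
  have : ∀ n1 : Fin g → ZMod 2, ∑ n2 : Fin g → ZMod 2, χ (Qf (n1, n2))
      = if n1 = 0 then (2:ℝ)^g else 0 := fun n1 => sum_char n1
  rw [Finset.sum_congr rfl fun n1 _ => this n1, Finset.sum_ite_eq' Finset.univ 0]
  simp

lemma gauss_shift (m : G g) : ∑ n : G g, χ (Qf n + Bf m n) = (2:ℝ)^g * χ (Qf m) := by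
  have key : ∀ n : G g, χ (Qf n) * χ (Qf m) = χ (Qf (n + m) + Bf m (n + m)) := by
    intro n
    have h1 : Qf (n + m) + Bf m (n + m) = Qf n + Qf m := by
      rw [Qf_add, Bf_comm m (n+m), Bf_add_left, Bf_self m, add_zero]
      have h2 : Bf n m + Bf n m = 0 := CharTwo.add_self_eq_zero _
      linear_combination h2
    rw [h1, χ_add]
  have hbij : Function.Bijective (fun n : G g => n + m) := (Equiv.addRight m).bijective
  have h2 := Fintype.sum_bijective _ hbij
    (fun n => χ (Qf n) * χ (Qf m)) (fun n => χ (Qf n + Bf m n)) key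
  rw [← h2, ← Finset.sum_mul, gauss]

end NR

namespace NR
open Matrix
variable {g : ℕ}

abbrev Kp (g : ℕ) := {x : G g // Qf x = 0}
abbrev Km (g : ℕ) := {x : G g // Qf x = 1}

lemma sum_subtype_eq {p : ZMod 2} (f : G g → ℝ) :
    ∑ k : {x : G g // Qf x = p}, f k.1 = ∑ k : G g, if Qf k = p then f k else 0 := by
  rw [← Finset.sum_filter]
  exact (Finset.sum_subtype _ (by simp) f).symm

lemma gadd_self (x : G g) : x + x = 0 :=
  Prod.ext (funext fun i => CharTwo.add_self_eq_zero _) (funext fun i => CharTwo.add_self_eq_zero _)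

lemma sum_Kp (m : G g) :
    ∑ k : Kp g, χ (Bf m k.1)
      = ((if m = 0 then (2:ℝ)^g * (2:ℝ)^g else 0) + (2:ℝ)^g * χ (Qf m)) / 2 := by
  rw [sum_subtype_eq (fun k => χ (Bf m k))]
  have : ∀ k : G g, (if Qf k = 0 then χ (Bf m k) else 0)
      = (χ (Bf m k) + χ (Qf k + Bf m k)) / 2 := by
    intro k
    rw [χ_add]
    split_ifs with h0
    · rw [h0, χ_zero]; ring
    · have : χ (Qf k) = -1 := by
        rcases zmod2_cases (Qf k) with h1 | h1
        · exact absurd h1 h0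
        · rw [h1, χ_one]
      rw [this]; ring
  rw [Finset.sum_congr rfl fun k _ => this k]
  rw [← Finset.sum_div, Finset.sum_add_distrib, sum_chi_Bf, gauss_shift]

lemma sum_Km (m : G g) :
    ∑ k : Km g, χ (Bf m k.1)
      = ((if m = 0 then (2:ℝ)^g * (2:ℝ)^g else 0) - (2:ℝ)^g * χ (Qf m)) / 2 := by
  rw [sum_subtype_eq (fun k => χ (Bf m k))]
  have : ∀ k : G g, (if Qf k = 1 then χ (Bf m k) else 0)
      = (χ (Bf m k) - χ (Qf k + Bf m k)) / 2 := by
    intro k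
    rw [χ_add]
    split_ifs with h0
    · rw [h0, χ_one]; ring
    · have h1 : Qf k = 0 := (zmod2_cases (Qf k)).resolve_right h0
      rw [h1, χ_zero]; ring
  rw [Finset.sum_congr rfl fun k _ => this k]
  rw [← Finset.sum_div, Finset.sum_sub_distrib, sum_chi_Bf, gauss_shift]

-- the matrix `X = 2^g • 1 - A`
noncomputable def Xmat (g : ℕ) : Matrix (Kp g) (Kp g) ℝ :=
  (2:ℝ)^g • (1 : Matrix (Kp g) (Kp g) ℝ) - Mplus g

lemma add_eq_zero_iff_subtype {m n : Kp g} : m.1 + n.1 = 0 ↔ m = n := by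
  constructor
  · intro h
    refine Subtype.ext ?_
    have h2 : (m.1 + n.1) + n.1 = n.1 := by rw [h, zero_add]
    rwa [add_assoc, gadd_self, add_zero] at h2
  · rintro rfl; exact gadd_self _

lemma Qf_add_Kp (m n : Kp g) : Qf (m.1 + n.1) = Bf m.1 n.1 := by
  rw [Qf_add, m.2, n.2, zero_add, zero_add]

lemma NNT (m n : Kp g) :
    (Nmat g * (Nmat g)ᵀ) m n = ((2:ℝ)^g/2) * (Xmat g m n) := by
  rw [Matrix.mul_apply]
  have h1 : ∀ k : Km g, Nmat g m k * (Nmat g)ᵀ k n = χ (Bf (m.1 + n.1) k.1) := by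
    intro k
    rw [Matrix.transpose_apply, Nmat, Nmat, Mmat_eq, Mmat_eq, ← χ_add, ← Bf_add_left]
  rw [Finset.sum_congr rfl fun k _ => h1 k, sum_Km, Qf_add_Kp]
  rw [Xmat]
  simp only [Matrix.sub_apply, Matrix.smul_apply, Matrix.one_apply, smul_eq_mul]
  rw [Mplus, Mmat_eq]
  by_cases h : m = n
  · subst h
    rw [if_pos rfl, if_pos (add_eq_zero_iff_subtype.mpr rfl), Bf_self, χ_zero]
    ring
  · rw [if_neg h, if_neg (fun hc => h (add_eq_zero_iff_subtype.mp hc))]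
    ring

lemma Asq (m n : Kp g) :
    (Mplus g * Mplus g) m n
      = ((2:ℝ)^g/2) * (Mplus g m n) + ((2:ℝ)^g * (2:ℝ)^g/2) * (if m = n then 1 else 0) := by
  rw [Matrix.mul_apply]
  have h1 : ∀ k : Kp g, Mplus g m k * Mplus g k n = χ (Bf (m.1 + n.1) k.1) := by
    intro k
    rw [Mplus, Mplus, Mmat_eq, Mmat_eq, Bf_comm k.1 n.1, ← χ_add, ← Bf_add_left]
  rw [Finset.sum_congr rfl fun k _ => h1 k, sum_Kp, Qf_add_Kp]
  rw [Mplus, Mmat_eq]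
  by_cases h : m = n
  · subst h
    rw [if_pos rfl, if_pos (add_eq_zero_iff_subtype.mpr rfl), Bf_self, χ_zero]
    ring
  · rw [if_neg h, if_neg (fun hc => h (add_eq_zero_iff_subtype.mp hc))]
    ring

end NR

namespace NR
open Matrix
variable {g : ℕ}

lemma chi_eq_ind (q : ZMod 2) :
    χ q = (if q = 0 then (1:ℝ) else 0) - (if q = 1 then (1:ℝ) else 0) := by
  rcases zmod2_cases q with rfl | rfl <;> simp [χ_zero, χ_one]

lemma card_Kp : (Fintype.card (Kp g) : ℝ) = ((2:ℝ)^g * (2:ℝ)^g + (2:ℝ)^g)/2 := by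
  have hG : (Fintype.card (G g) : ℝ) = (2:ℝ)^g * (2:ℝ)^g := by
    rw [Fintype.card_prod, Fintype.card_fun]
    push_cast
    simp
  have hsplit : ∀ n : G g, ((if Qf n = 0 then (1:ℝ) else 0) + (if Qf n = 1 then (1:ℝ) else 0)) = 1 := by
    intro n; rcases zmod2_cases (Qf n) with h | h <;> simp [h]
  have hcardp : ∑ n : G g, (if Qf n = 0 then (1:ℝ) else 0) = (Fintype.card (Kp g) : ℝ) := by
    rw [Finset.sum_boole, Fintype.card_subtype]
  have hcardm : ∑ n : G g, (if Qf n = 1 then (1:ℝ) else 0) = (Fintype.card (Km g) : ℝ) := by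
    rw [Finset.sum_boole, Fintype.card_subtype]
  have hsum : (Fintype.card (Kp g) : ℝ) + (Fintype.card (Km g) : ℝ) = (2:ℝ)^g * (2:ℝ)^g := by
    rw [← hcardp, ← hcardm, ← Finset.sum_add_distrib]
    rw [Finset.sum_congr rfl fun n _ => hsplit n, Finset.sum_const, ← hG]
    simp
  have hdiff : (Fintype.card (Kp g) : ℝ) - (Fintype.card (Km g) : ℝ) = (2:ℝ)^g := by
    rw [← hcardp, ← hcardm, ← Finset.sum_sub_distrib]
    rw [← Finset.sum_congr rfl fun n _ => chi_eq_ind (Qf n), gauss]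
  linarith

lemma rank_eq_trace {n : Type*} [Fintype n] [DecidableEq n] (P : Matrix n n ℝ)
    (h : P * P = P) : ((P.rank : ℝ)) = P.trace := by
  set f := P.mulVecLin with hf
  have hff : f ∘ₗ f = f := by rw [hf, ← Matrix.mulVecLin_mul, h]
  have hproj : LinearMap.IsProj (LinearMap.range f) f := by
    refine ⟨fun x => LinearMap.mem_range_self f x, ?_⟩
    rintro x ⟨y, rfl⟩
    exact congrFun (congrArg DFunLike.coe hff) y
  have htr := hproj.trace
  have h2 : LinearMap.trace ℝ (n → ℝ) f = P.trace := by
    rw [LinearMap.trace_eq_matrix_trace ℝ (Pi.basisFun ℝ n), LinearMap.toMatrix_eq_toMatrix']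
    congr 1
    have : f = Matrix.toLin' P := by rw [Matrix.toLin'_apply']
    rw [this, LinearMap.toMatrix'_toLin']
  rw [← h2, htr, Matrix.rank]

lemma rank_smul {m n : Type*} [Fintype m] [Fintype n] (a : ℝ) (ha : a ≠ 0)
    (X : Matrix m n ℝ) : (a • X).rank = X.rank := by
  have hsm : (a • X).mulVecLin = a • X.mulVecLin := by
    ext v i
    simp [Matrix.smul_mulVec]
  rw [Matrix.rank, Matrix.rank, hsm, LinearMap.range_smul _ a ha]

end NR

namespace NR
lemma mulVecLin_smul {m n : Type*} [Fintype n] (a : ℝ) (X : Matrix m n ℝ) :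
    (a • X).mulVecLin = a • X.mulVecLin := by
  ext v i
  simp [Matrix.smul_mulVec]
end NR

/-- `rank N = (1/3)(4^g − 1)`, and the columns of `N` span the full eigenspace
of `M⁺` for the eigenvalue `−2^{g−1}`. -/
theorem Nmat_rank (g : ℕ) (hg : 1 ≤ g) :
    3 * (Nmat g).rank = 4 ^ g - 1 ∧
      LinearMap.range (Matrix.mulVecLin (Nmat g)) =
        Module.End.eigenspace (Matrix.mulVecLin (Mplus g)) (-(2 : ℝ) ^ (g - 1)) := by
  classical
  set c : ℝ := (2:ℝ)^g with hcdef
  have hcpos : (0:ℝ) < c := by positivity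
  have hcne : c ≠ 0 := ne_of_gt hcpos
  have hc2 : c/2 ≠ 0 := div_ne_zero hcne two_ne_zero
  have h3cpos : (0:ℝ) < 3*c/2 := by positivity
  have h3c : (3*c/2) ≠ 0 := ne_of_gt h3cpos
  have hgpow : (2:ℝ)^(g-1) = c/2 := by
    rw [hcdef, eq_div_iff (two_ne_zero), ← pow_succ]
    congr 1
    omega
  -- matrix identities
  have hX : Nmat g * (Nmat g).transpose = (c/2) • NR.Xmat g := by
    ext m n
    rw [NR.NNT]
    simp [smul_eq_mul]
    exact Or.inl hcdef.symm
  have hAsq : Mplus g * Mplus g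
      = (c/2) • Mplus g + (c*c/2) • (1 : Matrix (NR.Kp g) (NR.Kp g) ℝ) := by
    ext m n
    rw [NR.Asq]
    simp only [Matrix.add_apply, Matrix.smul_apply, Matrix.one_apply, smul_eq_mul]
    rw [hcdef]
  have hXX : NR.Xmat g * NR.Xmat g = (3*c/2) • NR.Xmat g := by
    simp only [NR.Xmat, sub_mul, mul_sub, smul_mul_assoc, mul_smul_comm, one_mul, mul_one]
    rw [hAsq]
    module
  have hAX : Mplus g * NR.Xmat g = (-(c/2)) • NR.Xmat g := by
    simp only [NR.Xmat, mul_sub, mul_smul_comm, mul_one]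
    rw [hAsq]
    module
  -- range equalities
  have hr1 : LinearMap.range (Nmat g * (Nmat g).transpose).mulVecLin
      = LinearMap.range (NR.Xmat g).mulVecLin := by
    rw [hX, NR.mulVecLin_smul, LinearMap.range_smul _ _ hc2]
  have hle : LinearMap.range (Nmat g * (Nmat g).transpose).mulVecLin
      ≤ LinearMap.range (Nmat g).mulVecLin := by
    rw [Matrix.mulVecLin_mul]
    exact LinearMap.range_comp_le_range _ _
  have hrankNNT : (Nmat g * (Nmat g).transpose).rank = (Nmat g).rank :=
    Matrix.rank_self_mul_transpose _
  have hrange : LinearMap.range (Nmat g * (Nmat g).transpose).mulVecLin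
      = LinearMap.range (Nmat g).mulVecLin :=
    Submodule.eq_of_le_of_finrank_le hle hrankNNT.ge
  have heig : LinearMap.range (NR.Xmat g).mulVecLin
      = Module.End.eigenspace (Matrix.mulVecLin (Mplus g)) (-(2 : ℝ) ^ (g - 1)) := by
    ext v
    rw [Module.End.mem_eigenspace_iff]
    constructor
    · rintro ⟨y, rfl⟩
      show (Mplus g).mulVecLin ((NR.Xmat g).mulVecLin y) = _
      rw [Matrix.mulVecLin_apply, Matrix.mulVecLin_apply, Matrix.mulVec_mulVec, hAX, hgpow,
        Matrix.smul_mulVec]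
    · intro hv
      rw [Matrix.mulVecLin_apply, hgpow] at hv
      refine ⟨(3*c/2)⁻¹ • v, ?_⟩
      have hXv : (NR.Xmat g).mulVec v = (3*c/2) • v := by
        rw [NR.Xmat, Matrix.sub_mulVec, Matrix.smul_mulVec, Matrix.one_mulVec, hv,
          ← sub_smul]
        congr 1
        ring
      rw [Matrix.mulVecLin_apply, Matrix.mulVec_smul, hXv, smul_smul,
        inv_mul_cancel₀ h3c, one_smul]
  -- rank computation
  set P : Matrix (NR.Kp g) (NR.Kp g) ℝ := (3*c/2)⁻¹ • NR.Xmat g with hP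
  have hPP : P * P = P := by
    rw [hP, smul_mul_smul_comm, hXX, smul_smul]
    congr 1
    field_simp
  have htrX : (NR.Xmat g).trace = (Fintype.card (NR.Kp g) : ℝ) * (c - 1) := by
    rw [Matrix.trace]
    have hdiag : ∀ m : NR.Kp g, (NR.Xmat g).diag m = c - 1 := by
      intro m
      rw [Matrix.diag_apply, NR.Xmat]
      simp only [Matrix.sub_apply, Matrix.smul_apply, Matrix.one_apply_eq, smul_eq_mul, mul_one]
      rw [Mplus, NR.Mmat_eq, NR.Bf_self, NR.χ_zero]
    rw [Finset.sum_congr rfl fun m _ => hdiag m, Finset.sum_const]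
    simp [mul_comm]
  have htrP : P.trace = (c*c - 1)/3 := by
    rw [hP, Matrix.trace_smul, htrX, NR.card_Kp, smul_eq_mul]
    field_simp
    ring
  have hrP : ((P.rank : ℝ)) = (c*c-1)/3 := by rw [NR.rank_eq_trace P hPP, htrP]
  have hrN : (Nmat g).rank = P.rank := by
    have h1 : (Nmat g).rank = (Nmat g * (Nmat g).transpose).rank := hrankNNT.symm
    rw [h1, hX, NR.rank_smul _ hc2, hP, NR.rank_smul _ (inv_ne_zero h3c)]
  constructor
  · have h4 : (1:ℕ) ≤ 4^g := Nat.one_le_pow g 4 (by norm_num)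
    have hfin : ((3 * (Nmat g).rank : ℕ) : ℝ) = ((4^g - 1 : ℕ) : ℝ) := by
      rw [Nat.cast_sub h4]
      push_cast
      rw [hrN, hrP]
      have hcc : c * c = (4:ℝ)^g := by rw [hcdef, ← mul_pow]; norm_num
      rw [hcc]
      ring
    exact Nat.cast_injective hfin
  · rw [← hrange, hr1, heig]
end

section
/- Let g ≥ 1. For any vector X ∈ ℝ^{K_g^+} one has M^+ X = 2^g X if and only if N^T X = 0; and for any vector Y ∈ ℝ^{K_g^−} one has M^− Y = −2^g Y if and only if N Y = 0. -/
open scoped BigOperators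
open Matrix

namespace EigenAux

variable {g : ℕ}

abbrev V (g : ℕ) := (Fin g → ZMod 2) × (Fin g → ZMod 2)

def chi (a : ZMod 2) : ℝ := if a = 0 then 1 else -1

def Bf (x y : V g) : ZMod 2 := ∑ i, (x.1 i * y.2 i + y.1 i * x.2 i)

lemma zmod2_cases (a : ZMod 2) : a = 0 ∨ a = 1 := by revert a; decide

lemma zmod2_ne (a : ZMod 2) (h : a ≠ 0) : a = 1 := by
  rcases zmod2_cases a with h0 | h1
  · exact absurd h0 h
  · exact h1

lemma chi_zero : chi (0 : ZMod 2) = 1 := rfl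

lemma chi_one : chi (1 : ZMod 2) = -1 := rfl

lemma chi_add (a b : ZMod 2) : chi (a + b) = chi a * chi b := by
  have h2 : (1 : ZMod 2) + 1 = 0 := by decide
  rcases zmod2_cases a with rfl | rfl <;> rcases zmod2_cases b with rfl | rfl <;>
    simp [chi, h2] <;> norm_num

lemma chi_sum {ι : Type*} (s : Finset ι) (f : ι → ZMod 2) :
    chi (∑ i ∈ s, f i) = ∏ i ∈ s, chi (f i) := by
  induction s using Finset.cons_induction with
  | empty => simp [chi_zero]
  | cons a s ha ih => rw [Finset.sum_cons, Finset.prod_cons, chi_add, ih]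

lemma pow_val_eq (a b c d : ZMod 2) :
    (-1 : ℝ) ^ (a.val * b.val + c.val * d.val) = chi (a * b + c * d) := by
  have h2 : (1 : ZMod 2) + 1 = 0 := by decide
  have hv1 : ZMod.val (1 : ZMod 2) = 1 := rfl
  have hv0 : ZMod.val (0 : ZMod 2) = 0 := rfl
  rcases zmod2_cases a with rfl | rfl <;> rcases zmod2_cases b with rfl | rfl <;>
    rcases zmod2_cases c with rfl | rfl <;> rcases zmod2_cases d with rfl | rfl <;>
    simp [chi, h2, hv1, hv0] <;> norm_num

lemma Mmat_eq (m n : V g) : Mmat g m n = chi (Bf m n) := by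
  rw [Mmat, Bf, chi_sum, ← Finset.prod_pow_eq_pow_sum]
  exact Finset.prod_congr rfl fun i _ => pow_val_eq _ _ _ _

lemma Bf_comm (x y : V g) : Bf x y = Bf y x :=
  Finset.sum_congr rfl fun i _ => by ring

lemma Bf_add_left (x y n : V g) : Bf (x + y) n = Bf x n + Bf y n := by
  simp only [Bf, Prod.fst_add, Prod.snd_add, Pi.add_apply, ← Finset.sum_add_distrib]
  exact Finset.sum_congr rfl fun i _ => by ring

lemma Bf_add_right (x m n : V g) : Bf x (m + n) = Bf x m + Bf x n := by
  rw [Bf_comm, Bf_add_left, Bf_comm m x, Bf_comm n x]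

lemma Bf_self (x : V g) : Bf x x = 0 :=
  Finset.sum_eq_zero fun i _ => by
    rw [mul_comm (x.1 i) (x.2 i)]
    exact CharTwo.add_self_eq_zero _

lemma Bf_zero_left (n : V g) : Bf 0 n = 0 :=
  Finset.sum_eq_zero fun i _ => by
    simp

lemma Qf_add (x y : V g) : Qf (x + y) = Qf x + Qf y + Bf x y := by
  simp only [Qf, Bf, Prod.fst_add, Prod.snd_add, Pi.add_apply, ← Finset.sum_add_distrib]
  exact Finset.sum_congr rfl fun i _ => by ring

lemma V_add_self (x : V g) : x + x = 0 := by
  ext i <;> exact CharTwo.add_self_eq_zero _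

lemma neg_self (b : V g) : -b = b := (neg_eq_of_add_eq_zero_left (V_add_self b))

lemma add_eq_zero_iff' (a b : V g) : a + b = 0 ↔ a = b := by
  rw [add_eq_zero_iff_eq_neg, neg_self]

lemma sum_zmod2 (f : ZMod 2 → ℝ) : ∑ a, f a = f 0 + f 1 := by
  rw [show (Finset.univ : Finset (ZMod 2)) = {0, 1} from by decide]
  exact Finset.sum_pair (by decide)

lemma sum_pi_prod (w : Fin g → ZMod 2 → ℝ) :
    ∑ a : Fin g → ZMod 2, ∏ i, w i (a i) = ∏ i, ∑ t, w i t := by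
  rw [Finset.prod_univ_sum, Fintype.piFinset_univ]

lemma sum_chi_Q : ∑ n : V g, chi (Qf n) = (2 : ℝ) ^ g := by
  rw [Fintype.sum_prod_type]
  simp only [Qf]
  calc ∑ a : Fin g → ZMod 2, ∑ b : Fin g → ZMod 2, chi (∑ i, a i * b i)
      = ∑ a : Fin g → ZMod 2, ∏ i, ∑ t, chi (a i * t) := by
        refine Finset.sum_congr rfl fun a _ => ?_
        rw [← sum_pi_prod (fun i t => chi (a i * t))]
        exact Finset.sum_congr rfl fun b _ => chi_sum _ _
    _ = ∑ a : Fin g → ZMod 2, ∏ i, (if a i = 0 then (2:ℝ) else 0) := by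
        refine Finset.sum_congr rfl fun a _ => Finset.prod_congr rfl fun i _ => ?_
        rcases zmod2_cases (a i) with h | h <;> rw [h] <;>
          · rw [sum_zmod2]; norm_num [chi]
    _ = ∏ i : Fin g, ∑ s : ZMod 2, (if s = 0 then (2:ℝ) else 0) :=
        sum_pi_prod fun _ s => if s = 0 then (2:ℝ) else 0
    _ = (2 : ℝ) ^ g := by
        simp [sum_zmod2]

lemma exists_Bf_one (v : V g) (hv : v ≠ 0) : ∃ n : V g, Bf v n = 1 := by
  have h12 : v.1 ≠ 0 ∨ v.2 ≠ 0 := by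
    by_contra h
    push_neg at h
    exact hv (Prod.ext h.1 h.2)
  rcases h12 with h | h
  · obtain ⟨j, hj⟩ := Function.ne_iff.mp h
    refine ⟨(0, Pi.single j 1), ?_⟩
    have : Bf v (0, Pi.single j 1) = v.1 j := by
      simp [Bf, Pi.single_apply, mul_ite]
    rw [this]
    exact zmod2_ne _ hj
  · obtain ⟨j, hj⟩ := Function.ne_iff.mp h
    refine ⟨(Pi.single j 1, 0), ?_⟩
    have : Bf v (Pi.single j 1, 0) = v.2 j := by
      simp [Bf, Pi.single_apply, ite_mul]
    rw [this]
    exact zmod2_ne _ hj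

lemma sum_chi_Bf (v : V g) :
    ∑ n : V g, chi (Bf v n) = if v = 0 then (4 : ℝ) ^ g else 0 := by
  by_cases hv : v = 0
  · subst hv
    rw [if_pos rfl]
    have : ∀ n : V g, chi (Bf 0 n) = 1 := fun n => by rw [Bf_zero_left, chi_zero]
    rw [Finset.sum_congr rfl fun n _ => this n, Finset.sum_const, Finset.card_univ]
    have hc : Fintype.card (V g) = 2 ^ g * 2 ^ g := by
      simp [Fintype.card_prod, Fintype.card_fun]
    rw [hc]
    push_cast
    rw [← mul_pow]
    norm_num
  · rw [if_neg hv]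
    obtain ⟨n0, hn0⟩ := exists_Bf_one v hv
    have key : ∑ n : V g, chi (Bf v n) = - ∑ n : V g, chi (Bf v n) := by
      calc ∑ n : V g, chi (Bf v n)
          = ∑ n : V g, chi (Bf v (n + n0)) :=
            (Fintype.sum_equiv (Equiv.addRight n0) (fun n => chi (Bf v (n + n0)))
              (fun n => chi (Bf v n)) (fun x => rfl)).symm
        _ = ∑ n : V g, -chi (Bf v n) := by
            refine Finset.sum_congr rfl fun n _ => ?_
            rw [Bf_add_right, hn0, chi_add, chi_one]
            ring
        _ = - ∑ n : V g, chi (Bf v n) := by rw [Finset.sum_neg_distrib]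
    linarith [key]

lemma sum_chi_Q_add_Bf (v : V g) :
    ∑ n : V g, chi (Qf n + Bf v n) = chi (Qf v) * 2 ^ g := by
  have h : ∀ n : V g, Qf n + Bf v n = Qf v + Qf (n + v) := by
    intro n
    rw [Qf_add, Bf_comm v n]
    have hc : Qf v + Qf v = 0 := CharTwo.add_self_eq_zero _
    linear_combination -hc
  calc ∑ n : V g, chi (Qf n + Bf v n)
      = ∑ n : V g, chi (Qf v) * chi (Qf (n + v)) := by
        refine Finset.sum_congr rfl fun n _ => ?_
        rw [h n, chi_add]
    _ = chi (Qf v) * ∑ n : V g, chi (Qf (n + v)) := by rw [Finset.mul_sum]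
    _ = chi (Qf v) * ∑ n : V g, chi (Qf n) := by
        rw [Fintype.sum_equiv (Equiv.addRight v) (fun n => chi (Qf (n + v)))
          (fun n => chi (Qf n)) (fun x => rfl)]
    _ = chi (Qf v) * 2 ^ g := by rw [sum_chi_Q]

lemma sum_K (c : ZMod 2) (f : V g → ℝ) :
    ∑ n : {x : V g // Qf x = c}, f n.1 = ∑ n : V g, if Qf n = c then f n else 0 := by
  rw [← Finset.sum_filter]
  exact (Finset.sum_subtype _ (by simp) f).symm

lemma sum_K1_chi (v : V g) :
    ∑ n : {x : V g // Qf x = 1}, chi (Bf v n.1)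
      = ((if v = 0 then (4 : ℝ) ^ g else 0) - chi (Qf v) * 2 ^ g) / 2 := by
  rw [sum_K 1 (fun n => chi (Bf v n))]
  have h : ∀ n : V g, (if Qf n = 1 then chi (Bf v n) else 0)
      = (chi (Bf v n) - chi (Qf n + Bf v n)) / 2 := by
    intro n
    rcases zmod2_cases (Qf n) with h | h <;> rw [h] <;>
      simp [chi_add, chi_zero, chi_one] <;> ring
  rw [Finset.sum_congr rfl fun n _ => h n, ← Finset.sum_div, Finset.sum_sub_distrib,
    sum_chi_Bf, sum_chi_Q_add_Bf]

lemma sum_K0_chi (v : V g) :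
    ∑ n : {x : V g // Qf x = 0}, chi (Bf v n.1)
      = ((if v = 0 then (4 : ℝ) ^ g else 0) + chi (Qf v) * 2 ^ g) / 2 := by
  rw [sum_K 0 (fun n => chi (Bf v n))]
  have h : ∀ n : V g, (if Qf n = 0 then chi (Bf v n) else 0)
      = (chi (Bf v n) + chi (Qf n + Bf v n)) / 2 := by
    intro n
    rcases zmod2_cases (Qf n) with h | h <;> rw [h] <;>
      simp [chi_add, chi_zero, chi_one] <;> ring
  rw [Finset.sum_congr rfl fun n _ => h n, ← Finset.sum_div, Finset.sum_add_distrib,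
    sum_chi_Bf, sum_chi_Q_add_Bf]


lemma Qf_sum_plus (m m' : {x : V g // Qf x = 0}) :
    Qf (m.1 + m'.1) = Bf m.1 m'.1 := by
  rw [Qf_add, m.2, m'.2, zero_add, zero_add]

lemma Qf_sum_minus (m m' : {x : V g // Qf x = 1}) :
    Qf (m.1 + m'.1) = Bf m.1 m'.1 := by
  rw [Qf_add, m.2, m'.2]
  have : (1 : ZMod 2) + 1 = 0 := by decide
  rw [this, zero_add]

lemma key_plus :
    (2 : ℝ) • (Nmat g * (Nmat g)ᵀ)
      = ((4 : ℝ) ^ g) • (1 : Matrix {x : V g // Qf x = 0} {x : V g // Qf x = 0} ℝ)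
        - ((2 : ℝ) ^ g) • Mplus g := by
  ext m m'
  have hlhs : (Nmat g * (Nmat g)ᵀ) m m'
      = ∑ n : {x : V g // Qf x = 1}, chi (Bf (m.1 + m'.1) n.1) := by
    rw [Matrix.mul_apply]
    refine Finset.sum_congr rfl fun n _ => ?_
    simp only [Matrix.transpose_apply, Nmat]
    rw [Mmat_eq, Mmat_eq, ← chi_add, ← Bf_add_left]
  simp only [Matrix.smul_apply, Matrix.sub_apply, Matrix.one_apply, smul_eq_mul]
  rw [hlhs, sum_K1_chi]
  have hM : Mplus g m m' = chi (Bf m.1 m'.1) := Mmat_eq _ _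
  rw [hM, Qf_sum_plus]
  by_cases h : m = m'
  · subst h
    rw [if_pos rfl, if_pos (V_add_self m.1), Bf_self, chi_zero]
    ring
  · have hne : ¬ (m.1 + m'.1 = 0) := by
      rw [add_eq_zero_iff']
      exact fun hh => h (Subtype.ext hh)
    rw [if_neg h, if_neg hne]
    ring

lemma key_minus :
    (2 : ℝ) • ((Nmat g)ᵀ * Nmat g)
      = ((4 : ℝ) ^ g) • (1 : Matrix {x : V g // Qf x = 1} {x : V g // Qf x = 1} ℝ)
        + ((2 : ℝ) ^ g) • Mminus g := by
  ext m m'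
  have hlhs : ((Nmat g)ᵀ * Nmat g) m m'
      = ∑ n : {x : V g // Qf x = 0}, chi (Bf (m.1 + m'.1) n.1) := by
    rw [Matrix.mul_apply]
    refine Finset.sum_congr rfl fun n _ => ?_
    simp only [Matrix.transpose_apply, Nmat]
    rw [Mmat_eq, Mmat_eq, Bf_comm n.1 m.1, Bf_comm n.1 m'.1, ← chi_add,
      ← Bf_add_left, Bf_comm]
  simp only [Matrix.smul_apply, Matrix.add_apply, Matrix.one_apply, smul_eq_mul]
  rw [hlhs, sum_K0_chi]
  have hM : Mminus g m m' = chi (Bf m.1 m'.1) := Mmat_eq _ _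
  rw [hM, Qf_sum_minus]
  by_cases h : m = m'
  · subst h
    rw [if_pos rfl, if_pos (V_add_self m.1), Bf_self, chi_zero]
    ring
  · have hne : ¬ (m.1 + m'.1 = 0) := by
      rw [add_eq_zero_iff']
      exact fun hh => h (Subtype.ext hh)
    rw [if_neg h, if_neg hne]
    ring

end EigenAux

open EigenAux

/-- `M⁺X = 2^g X ↔ NᵀX = 0`, and `M⁻Y = −2^g Y ↔ NY = 0`. -/
theorem eigen_iff_kernel (g : ℕ) (hg : 1 ≤ g) :
    (∀ X : {x : (Fin g → ZMod 2) × (Fin g → ZMod 2) // Qf x = 0} → ℝ,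
        (Mplus g).mulVec X = (2 : ℝ) ^ g • X ↔ (Nmat g)ᵀ.mulVec X = 0) ∧
      ∀ Y : {x : (Fin g → ZMod 2) × (Fin g → ZMod 2) // Qf x = 1} → ℝ,
        (Mminus g).mulVec Y = (-(2 : ℝ) ^ g) • Y ↔ (Nmat g).mulVec Y = 0 := by
  have h44 : (4 : ℝ) ^ g = (2 : ℝ) ^ g * (2 : ℝ) ^ g := by
    rw [← mul_pow]; norm_num
  have h2g : ((2 : ℝ) ^ g) ≠ 0 := by positivity
  constructor
  · intro X
    have hmv : (2 : ℝ) • ((Nmat g * (Nmat g)ᵀ).mulVec X)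
        = (4 : ℝ) ^ g • X - (2 : ℝ) ^ g • ((Mplus g).mulVec X) := by
      have := congrArg (fun A => A.mulVec X) (key_plus (g := g))
      simpa [Matrix.smul_mulVec, Matrix.sub_mulVec, Matrix.one_mulVec] using this
    constructor
    · intro h
      have h0 : (Nmat g * (Nmat g)ᵀ).mulVec X = 0 := by
        have h2 : (2 : ℝ) • ((Nmat g * (Nmat g)ᵀ).mulVec X) = 0 := by
          rw [hmv, h, smul_smul, ← h44, sub_self]
        exact smul_right_injective _ (two_ne_zero (α := ℝ))
          (h2.trans (smul_zero (2 : ℝ)).symm)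
      have hdot : dotProduct ((Nmat g)ᵀ.mulVec X) ((Nmat g)ᵀ.mulVec X) = 0 := by
        nth_rewrite 1 [Matrix.mulVec_transpose]
        rw [← Matrix.dotProduct_mulVec, Matrix.mulVec_mulVec, h0, dotProduct_zero]
      exact dotProduct_self_eq_zero.mp hdot
    · intro h
      have h0 : (Nmat g * (Nmat g)ᵀ).mulVec X = 0 := by
        rw [← Matrix.mulVec_mulVec, h, Matrix.mulVec_zero]
      have h2 : (2 : ℝ) ^ g • ((Mplus g).mulVec X) = (2 : ℝ) ^ g • ((2 : ℝ) ^ g • X) := by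
        have hz := hmv
        rw [h0, smul_zero] at hz
        rw [smul_smul, ← h44]
        exact (sub_eq_zero.mp hz.symm).symm
      exact smul_right_injective _ h2g h2
  · intro Y
    have hmv : (2 : ℝ) • (((Nmat g)ᵀ * Nmat g).mulVec Y)
        = (4 : ℝ) ^ g • Y + (2 : ℝ) ^ g • ((Mminus g).mulVec Y) := by
      have := congrArg (fun A => A.mulVec Y) (key_minus (g := g))
      simpa [Matrix.smul_mulVec, Matrix.add_mulVec, Matrix.one_mulVec] using this
    constructor
    · intro h
      have h0 : ((Nmat g)ᵀ * Nmat g).mulVec Y = 0 := by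
        have h2 : (2 : ℝ) • (((Nmat g)ᵀ * Nmat g).mulVec Y) = 0 := by
          rw [hmv, h, smul_smul]
          rw [show ((2:ℝ)^g) * (-(2:ℝ)^g) = -((4:ℝ)^g) by rw [h44]; ring]
          rw [neg_smul, add_neg_cancel]
        exact smul_right_injective _ (two_ne_zero (α := ℝ))
          (h2.trans (smul_zero (2 : ℝ)).symm)
      have hdot : dotProduct ((Nmat g).mulVec Y) ((Nmat g).mulVec Y) = 0 := by
        nth_rewrite 1 [show Nmat g = ((Nmat g)ᵀ)ᵀ from (Matrix.transpose_transpose _).symm]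
        rw [Matrix.mulVec_transpose, ← Matrix.dotProduct_mulVec,
          Matrix.mulVec_mulVec, h0, dotProduct_zero]
      exact dotProduct_self_eq_zero.mp hdot
    · intro h
      have h0 : ((Nmat g)ᵀ * Nmat g).mulVec Y = 0 := by
        rw [← Matrix.mulVec_mulVec, h, Matrix.mulVec_zero]
      have h2 : (2 : ℝ) ^ g • ((Mminus g).mulVec Y)
          = (2 : ℝ) ^ g • ((-(2 : ℝ) ^ g) • Y) := by
        have hz := hmv
        rw [h0, smul_zero] at hz
        rw [smul_smul, show ((2:ℝ)^g) * (-(2:ℝ)^g) = -((4:ℝ)^g) by rw [h44]; ring,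
          neg_smul]
        exact eq_neg_of_add_eq_zero_left (by rw [add_comm]; exact hz.symm)
      exact smul_right_injective _ h2g h2
end

section
/- Two claims. (1) Let g ≥ 1 and let L(g) be the g-fold Kronecker product of the 3×3 matrix M^+(1). Then the characteristic polynomial of L(g) equals ∏_{k=0}^{g} (X − (−1)^k 2^{g−k})^{binom(g,k)·2^{g−k}}; in particular the eigenvalues of L(g) are (−1)^k 2^{g−k} with multiplicity binom(g,k)·2^{g−k} for k = 0, …, g. (2) Consequently the matrix 2^{g−1}(2^g · I_{3^g} − L(g)) has rank 3^g − 2^g. -/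
open scoped BigOperators

open Matrix Polynomial

/-- The `3 × 3` matrix `M⁺(1) = [[1,1,1],[1,1,−1],[1,−1,1]]`. -/
def MplusOne : Matrix (Fin 3) (Fin 3) ℝ :=
  !![1, 1, 1; 1, 1, -1; 1, -1, 1]

/-- `L(g)`, the `g`-fold Kronecker product of `M⁺(1)`, realized as the
`3^g × 3^g` matrix with entry `∏ i, M⁺(1) (m i) (n i)`. -/
def Lmat (g : ℕ) : Matrix (Fin g → Fin 3) (Fin g → Fin 3) ℝ :=
  fun m n => ∏ i, MplusOne (m i) (n i)

/-! ### Auxiliary machinery -/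

noncomputable def P3 : Matrix (Fin 3) (Fin 3) ℝ := !![1,1,1; 1,0,-1; 0,1,-1]
noncomputable def Q3 : Matrix (Fin 3) (Fin 3) ℝ :=
  !![1/3, 2/3, -1/3; 1/3, -1/3, 2/3; 1/3, -1/3, -1/3]
noncomputable def d3 : Fin 3 → ℝ := ![2, 2, -1]

lemma hPQ : P3 * Q3 = 1 := by
  show (!![1,1,1; 1,0,-1; 0,1,-1] : Matrix (Fin 3) (Fin 3) ℝ) * _ = _
  rw [show (1 : Matrix (Fin 3) (Fin 3) ℝ) = !![1,0,0;0,1,0;0,0,1] by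
    ext i j; fin_cases i <;> fin_cases j <;>
      simp [Matrix.one_apply, Matrix.vecHead, Matrix.vecTail]]
  unfold Q3
  norm_num [Matrix.mul_fin_three]

lemma hM : MplusOne = P3 * Matrix.diagonal d3 * Q3 := by
  have : Matrix.diagonal d3 = !![2,0,0;0,2,0;0,0,-1] := by
    ext i j; fin_cases i <;> fin_cases j <;>
      simp [d3, Matrix.diagonal_apply, Matrix.vecHead, Matrix.vecTail]
  rw [this]
  unfold MplusOne P3 Q3
  norm_num [Matrix.mul_fin_three]

def kron (g : ℕ) (A : Matrix (Fin 3) (Fin 3) ℝ) :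
    Matrix (Fin g → Fin 3) (Fin g → Fin 3) ℝ :=
  fun m n => ∏ i, A (m i) (n i)

lemma kron_mul (g : ℕ) (A B : Matrix (Fin 3) (Fin 3) ℝ) :
    kron g (A * B) = kron g A * kron g B := by
  ext m n
  simp only [kron, Matrix.mul_apply]
  rw [Finset.prod_univ_sum, Fintype.piFinset_univ]
  exact Finset.sum_congr rfl fun p _ => Finset.prod_mul_distrib

lemma kron_diagonal (g : ℕ) (d : Fin 3 → ℝ) :
    kron g (Matrix.diagonal d) = Matrix.diagonal (fun m => ∏ i, d (m i)) := by
  ext m n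
  simp only [kron, Matrix.diagonal_apply]
  by_cases h : m = n
  · subst h; simp
  · rw [if_neg h]
    obtain ⟨i, hi⟩ := Function.ne_iff.mp h
    exact Finset.prod_eq_zero (Finset.mem_univ i) (if_neg hi)

lemma kron_one (g : ℕ) : kron g 1 = 1 := by
  rw [← Matrix.diagonal_one, kron_diagonal]
  ext m n; simp

lemma charpoly_conj {n : Type*} [Fintype n] [DecidableEq n] (P A Q : Matrix n n ℝ)
    (h : P * Q = 1) : (P * A * Q).charpoly = A.charpoly := by
  have hmap : (P.map C) * (Q.map C) = 1 := by
    rw [← Matrix.map_mul, h, Matrix.map_one _ (map_zero C) (map_one C)]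
  have hc : charmatrix (P * A * Q) = P.map C * charmatrix A * Q.map C := by
    rw [charmatrix, charmatrix]
    simp only [RingHom.mapMatrix_apply]
    rw [Matrix.mul_sub, Matrix.sub_mul]
    congr 1
    · rw [scalar_apply, ← Matrix.smul_one_eq_diagonal, Matrix.mul_smul, Matrix.mul_one,
        Matrix.smul_mul, hmap]
    · rw [← Matrix.map_mul, ← Matrix.map_mul]
  have hdet : (P.map C).det * (Q.map C).det = 1 := by
    rw [← Matrix.det_mul, hmap, Matrix.det_one]
  rw [Matrix.charpoly, hc, Matrix.det_mul, Matrix.det_mul, Matrix.charpoly]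
  calc (P.map C).det * (charmatrix A).det * (Q.map C).det
      = (P.map C).det * (Q.map C).det * (charmatrix A).det := by ring
    _ = (charmatrix A).det := by rw [hdet, one_mul]

lemma charpoly_diag {n : Type*} [Fintype n] [DecidableEq n] (w : n → ℝ) :
    (Matrix.diagonal w).charpoly = ∏ i, (X - C (w i)) := by
  rw [Matrix.charpoly, charmatrix]
  simp only [RingHom.mapMatrix_apply]
  rw [Matrix.diagonal_map (map_zero C), scalar_apply, Matrix.diagonal_sub,
    Matrix.det_diagonal]

def cnt {g : ℕ} (m : Fin g → Fin 3) : ℕ := (Finset.univ.filter fun i => m i = 2).card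

lemma cnt_le {g : ℕ} (m : Fin g → Fin 3) : cnt m ≤ g :=
  (Finset.card_filter_le _ _).trans_eq (by simp)

lemma cnt_cons {g : ℕ} (j : Fin 3) (m : Fin g → Fin 3) :
    cnt (Fin.cons j m) = (if j = 2 then 1 else 0) + cnt m := by
  simp only [cnt, Finset.card_filter, Fin.sum_univ_succ, Fin.cons_zero, Fin.cons_succ]

lemma card_cnt : ∀ g k : ℕ,
    (Finset.univ.filter fun m : Fin g → Fin 3 => cnt m = k).card = g.choose k * 2 ^ (g - k)
  | 0, 0 => by
    rw [Finset.filter_true_of_mem fun m _ => Nat.le_zero.mp (cnt_le m)]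
    simp
  | 0, (k+1) => by
    rw [Finset.filter_false_of_mem fun m _ => by
      have := cnt_le m; omega]
    simp
  | (g+1), k => by
    have key : (Finset.univ.filter fun m : Fin (g+1) → Fin 3 => cnt m = k).card
        = 2 * (Finset.univ.filter fun m : Fin g → Fin 3 => cnt m = k).card
          + (Finset.univ.filter fun m : Fin g → Fin 3 => 1 + cnt m = k).card := by
      rw [Finset.card_filter, Finset.card_filter, Finset.card_filter]
      rw [← Fintype.sum_equiv (Fin.consEquiv fun _ => Fin 3)
        (fun p => if cnt (Fin.cons p.1 p.2) = k then 1 else 0)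
        (fun m => if cnt m = k then 1 else 0) (fun p => rfl)]
      rw [Fintype.sum_prod_type, Fin.sum_univ_three]
      simp only [cnt_cons, show ((0:Fin 3) = 2) = False from by decide,
        show ((1:Fin 3) = 2) = False from by decide,
        show ((2:Fin 3) = 2) = True from by decide, if_true, if_false, zero_add]
      rw [two_mul]
    rw [key]
    cases k with
    | zero =>
      rw [show (Finset.univ.filter fun m : Fin g → Fin 3 => 1 + cnt m = 0) = ∅ from
        Finset.filter_false_of_mem fun m _ => by omega, card_cnt g 0]
      simp [pow_succ]; ring
    | succ k =>
      rw [Finset.filter_congr (fun m _ => by omega :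
          ∀ m ∈ Finset.univ, (1 + cnt m = k + 1) ↔ (cnt m = k)),
        card_cnt g (k+1), card_cnt g k, Nat.choose_succ_succ]
      rcases le_or_gt (k+1) g with h | h
      · have h2 : g - k = (g - (k+1)) + 1 := by omega
        rw [h2, pow_succ]
        have h3 : g + 1 - (k + 1) = (g - (k+1)) + 1 := by omega
        rw [h3, pow_succ]; ring
      · rw [Nat.choose_eq_zero_of_lt h]
        have h3 : g + 1 - (k + 1) = g - k := by omega
        rw [h3]; ring

lemma d3_of_ne (j : Fin 3) (h : j ≠ 2) : d3 j = 2 := by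
  fin_cases j <;> simp_all [d3]

lemma card_not {g : ℕ} (m : Fin g → Fin 3) :
    (Finset.univ.filter fun i => ¬ m i = 2).card = g - cnt m := by
  have := Finset.card_filter_add_card_filter_not
    (s := (Finset.univ : Finset (Fin g))) (p := fun i => m i = 2)
  simp only [Finset.card_univ, Fintype.card_fin] at this
  have h := cnt_le m
  unfold cnt at *
  omega

lemma prod_d3 {g : ℕ} (m : Fin g → Fin 3) :
    ∏ i, d3 (m i) = (-1 : ℝ) ^ (cnt m) * 2 ^ (g - cnt m) := by
  rw [← Finset.prod_filter_mul_prod_filter_not Finset.univ (fun i => m i = 2)]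
  congr 1
  · have h1 : ∀ i ∈ Finset.univ.filter (fun i => m i = 2), d3 (m i) = -1 := by
      intro i hi
      rw [(Finset.mem_filter.mp hi).2]
      simp [d3]
    rw [Finset.prod_congr rfl h1, Finset.prod_const]
    rfl
  · rw [Finset.prod_congr rfl (fun i hi =>
      d3_of_ne _ (Finset.mem_filter.mp hi).2), Finset.prod_const, card_not]

lemma grouped (g : ℕ) :
    ∏ m : Fin g → Fin 3, (X - C ((-1 : ℝ) ^ (cnt m) * 2 ^ (g - cnt m)))
      = ∏ k ∈ Finset.range (g + 1),
          (X - C ((-1 : ℝ) ^ k * 2 ^ (g - k))) ^ (g.choose k * 2 ^ (g - k)) := by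
  rw [← Finset.prod_fiberwise_of_maps_to
    (g := fun m : Fin g → Fin 3 => cnt m) (t := Finset.range (g + 1))
    (fun m _ => Finset.mem_range.mpr (Nat.lt_succ_of_le (cnt_le m)))
    (fun m => X - C ((-1 : ℝ) ^ (cnt m) * 2 ^ (g - cnt m)))]
  refine Finset.prod_congr rfl fun k _ => ?_
  rw [Finset.prod_congr rfl (fun m hm => by
      rw [(Finset.mem_filter.mp hm).2]), Finset.prod_const, card_cnt]

lemma eig_ne (g c : ℕ) (hc : c ≤ g) (h : c ≠ 0) :
    (2 : ℝ) ^ g - (-1 : ℝ) ^ c * 2 ^ (g - c) ≠ 0 := by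
  rw [sub_ne_zero]
  intro he
  have habs : (2 : ℝ) ^ g = 2 ^ (g - c) := by
    have := congrArg abs he
    simpa [abs_mul, abs_pow, abs_two] using this
  have hnat : ((2 ^ g : ℕ) : ℝ) = ((2 ^ (g - c) : ℕ) : ℝ) := by push_cast; exact habs
  have := Nat.pow_right_injective (le_refl 2) (Nat.cast_injective hnat)
  omega

/-- The characteristic polynomial of `L(g)` is
`∏_{k=0}^{g} (X − (−1)^k 2^{g−k})^{C(g,k)·2^{g−k}}` (so the eigenvalues of `L(g)`
are `(−1)^k 2^{g−k}` with multiplicity `C(g,k)·2^{g−k}`), and consequently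
`2^{g−1}(2^g·I − L(g))` has rank `3^g − 2^g`. -/
theorem Lmat_charpoly_and_rank (g : ℕ) (hg : 1 ≤ g) :
    (Lmat g).charpoly =
        ∏ k ∈ Finset.range (g + 1),
          (Polynomial.X - Polynomial.C ((-1 : ℝ) ^ k * 2 ^ (g - k))) ^
            (g.choose k * 2 ^ (g - k)) ∧
      ((2 : ℝ) ^ (g - 1) •
          ((2 : ℝ) ^ g • (1 : Matrix (Fin g → Fin 3) (Fin g → Fin 3) ℝ) - Lmat g)).rank =
        3 ^ g - 2 ^ g := by
  classical
  have hfact : Lmat g = kron g P3 * kron g (Matrix.diagonal d3) * kron g Q3 := by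
    show kron g MplusOne = _
    rw [hM, kron_mul, kron_mul]
  have hunit : kron g P3 * kron g Q3 = 1 := by rw [← kron_mul, hPQ, kron_one]
  have hdiagw : kron g (Matrix.diagonal d3)
      = Matrix.diagonal (fun m : Fin g → Fin 3 => (-1 : ℝ) ^ (cnt m) * 2 ^ (g - cnt m)) := by
    rw [kron_diagonal]
    exact congrArg Matrix.diagonal (funext fun m => prod_d3 m)
  constructor
  · rw [hfact, charpoly_conj _ _ _ hunit, hdiagw, charpoly_diag]
    exact grouped g
  · set B := (2 : ℝ) ^ g • (1 : Matrix (Fin g → Fin 3) (Fin g → Fin 3) ℝ) - Lmat g with hB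
    have hsm : (2 : ℝ) ^ (g - 1) • B
        = (((2 : ℝ) ^ (g - 1)) • (1 : Matrix (Fin g → Fin 3) (Fin g → Fin 3) ℝ)) * B := by
      rw [Matrix.smul_mul, Matrix.one_mul]
    have hdet1 : IsUnit (((2 : ℝ) ^ (g - 1)) •
        (1 : Matrix (Fin g → Fin 3) (Fin g → Fin 3) ℝ)).det := by
      rw [Matrix.smul_one_eq_diagonal, Matrix.det_diagonal, Finset.prod_const]
      simp only [isUnit_iff_ne_zero]
      positivity
    rw [hsm, Matrix.rank_mul_eq_right_of_isUnit_det _ _ hdet1]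
    have hdetPQ : (kron g P3).det * (kron g Q3).det = 1 := by
      rw [← Matrix.det_mul, hunit, Matrix.det_one]
    have hP : IsUnit (kron g P3).det := IsUnit.of_mul_eq_one _ hdetPQ
    have hQ : IsUnit (kron g Q3).det :=
      IsUnit.of_mul_eq_one _ (by rw [mul_comm]; exact hdetPQ)
    have hBfact : B = kron g P3 *
        Matrix.diagonal (fun m : Fin g → Fin 3 =>
          (2 : ℝ) ^ g - (-1 : ℝ) ^ (cnt m) * 2 ^ (g - cnt m)) * kron g Q3 := by
      have hd : Matrix.diagonal (fun m : Fin g → Fin 3 =>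
            (2 : ℝ) ^ g - (-1 : ℝ) ^ (cnt m) * 2 ^ (g - cnt m))
          = (2 : ℝ) ^ g • (1 : Matrix (Fin g → Fin 3) (Fin g → Fin 3) ℝ)
            - Matrix.diagonal (fun m : Fin g → Fin 3 =>
                (-1 : ℝ) ^ (cnt m) * 2 ^ (g - cnt m)) := by
        rw [Matrix.smul_one_eq_diagonal, ← Matrix.diagonal_sub]
      rw [hd, Matrix.mul_sub, Matrix.sub_mul, ← hdiagw, ← hfact, hB]
      congr 1
      rw [Matrix.mul_smul, Matrix.mul_one, Matrix.smul_mul, hunit]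
    rw [hBfact, Matrix.rank_mul_eq_left_of_isUnit_det _ _ hQ,
      Matrix.rank_mul_eq_right_of_isUnit_det _ _ hP, Matrix.rank_diagonal,
      Fintype.card_subtype]
    have hiff : ∀ m ∈ (Finset.univ : Finset (Fin g → Fin 3)),
        ((2 : ℝ) ^ g - (-1 : ℝ) ^ (cnt m) * 2 ^ (g - cnt m) ≠ 0) ↔ ¬ (cnt m = 0) := by
      intro m _
      constructor
      · intro h hc
        apply h
        rw [hc]
        simp
      · intro hc
        exact eig_ne g (cnt m) (cnt_le m) hc
    rw [Finset.filter_congr hiff]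
    have hsum := Finset.card_filter_add_card_filter_not
      (s := (Finset.univ : Finset (Fin g → Fin 3))) (p := fun m => cnt m = 0)
    rw [card_cnt g 0] at hsum
    have hcard : (Finset.univ : Finset (Fin g → Fin 3)).card = 3 ^ g := by
      simp [Finset.card_univ]
    rw [hcard] at hsum
    simp only [Nat.choose_zero_right, Nat.sub_zero, one_mul] at hsum
    omega
end
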